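/- Let (A(p), B(p)) be a linearly parameterized matrix pair satisfying the binary assumption, with graph 𝔾. Then 𝔾 has an unbalanced similarity class of multi-colored subgraphs and a spanning subgraph which is a disjoint union of m cactus graphs rooted at the m vertices with labels n+1 to n+m, respectively, if and only if 𝔾 has an unbalanced similarity class of multi-colored subgraphs and a spanning forest rooted at the m vertices with labels n+1 to n+m. -/

import Mathlib

open Matrix BigOperators

namespace StructCtrl

/-- A general linearly parameterized `n1 × n2` matrix `M(p) = ∑ k, p k • (g k * h k)`,
with columns `g k` and rows `h k`. -/
noncomputable def paramMat {q n1 n2 : ℕ} (g : Fin q → Fin n1 → ℝ) (h : Fin q → Fin n2 → ℝ)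
    (p : Fin q → ℝ) : Matrix (Fin n1) (Fin n2) ℝ :=
  Matrix.of fun i j => ∑ k : Fin q, p k * (g k i * h k j)

/-- Generic rank: the maximum over `p ∈ ℝ^q` of the rank of `M(p)`. -/
noncomputable def genericRank {q n1 n2 : ℕ} (g : Fin q → Fin n1 → ℝ)
    (h : Fin q → Fin n2 → ℝ) : ℕ :=
  ⨆ p : Fin q → ℝ, (paramMat g h p).rank

/-- `A(p)`: the `n × n` matrix of the first `n` columns of `[A(p) B(p)]`. -/
noncomputable def Amat {n m q : ℕ} (g : Fin q → Fin n → ℝ) (h : Fin q → Fin (n + m) → ℝ)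
    (p : Fin q → ℝ) : Matrix (Fin n) (Fin n) ℝ :=
  Matrix.of fun i j => paramMat g h p i (Fin.castAdd m j)

/-- `B(p)`: the `n × m` matrix of the last `m` columns of `[A(p) B(p)]`. -/
noncomputable def Bmat {n m q : ℕ} (g : Fin q → Fin n → ℝ) (h : Fin q → Fin (n + m) → ℝ)
    (p : Fin q → ℝ) : Matrix (Fin n) (Fin m) ℝ :=
  Matrix.of fun i j => paramMat g h p i (Fin.natAdd n j)

/-- Controllability matrix `[B  AB  …  A^{n-1}B]` (columns indexed by `Fin n × Fin m`). -/
noncomputable def ctrbMat {n m : ℕ} (A : Matrix (Fin n) (Fin n) ℝ)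
    (B : Matrix (Fin n) (Fin m) ℝ) : Matrix (Fin n) (Fin n × Fin m) ℝ :=
  Matrix.of fun i kj => (A ^ (kj.1 : ℕ) * B) i kj.2

/-- `(A, B)` is structurally controllable: for some parameter value the controllability
matrix has full rank `n`. -/
def StructurallyControllable {n m q : ℕ} (g : Fin q → Fin n → ℝ)
    (h : Fin q → Fin (n + m) → ℝ) : Prop :=
  ∃ p : Fin q → ℝ, (ctrbMat (Amat g h p) (Bmat g h p)).rank = n

/-- The binary assumption: all entries of every `g k` and every `h k` are `0` or `1`. -/
def BinaryAssumption {n m q : ℕ} (g : Fin q → Fin n → ℝ)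
    (h : Fin q → Fin (n + m) → ℝ) : Prop :=
  (∀ k i, g k i = 0 ∨ g k i = 1) ∧ (∀ k j, h k j = 0 ∨ h k j = 1)

/-- The unitary assumption: every `g k` and every `h k` is a standard unit vector, and the
pairs `(g k, h k)` are pairwise distinct. -/
def UnitaryAssumption {n m q : ℕ} (g : Fin q → Fin n → ℝ)
    (h : Fin q → Fin (n + m) → ℝ) : Prop :=
  (∀ k, ∃ i : Fin n, g k = Pi.single i 1) ∧
  (∀ k, ∃ j : Fin (n + m), h k = Pi.single j 1) ∧
  (∀ k k', k ≠ k' → (g k, h k) ≠ (g k', h k'))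

/-- `(A, B)` is reducible: some simultaneous permutation of the states puts the pair,
for all parameter values, in block-triangular form with a zero top-right `n1 × (n - n1)`
block of `A` and a zero top `n1 × m` block of `B`, where `1 ≤ n1 < n`. -/
def Reducible {n m q : ℕ} (g : Fin q → Fin n → ℝ) (h : Fin q → Fin (n + m) → ℝ) : Prop :=
  ∃ (σ : Equiv.Perm (Fin n)) (n1 : ℕ), 1 ≤ n1 ∧ n1 < n ∧ ∀ p : Fin q → ℝ,
    (∀ i j : Fin n, (i : ℕ) < n1 → n1 ≤ (j : ℕ) → Amat g h p (σ i) (σ j) = 0) ∧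
    (∀ i : Fin n, (i : ℕ) < n1 → ∀ jb : Fin m, Bmat g h p (σ i) jb = 0)

/-- `(A, B)` is irreducible. -/
def PairIrreducible {n m q : ℕ} (g : Fin q → Fin n → ℝ)
    (h : Fin q → Fin (n + m) → ℝ) : Prop :=
  ¬ Reducible g h

/-- Arc (of any color) of the graph `𝔾` of `(A, B)` from vertex `a` to vertex `b`:
`b` is a row-vertex `i` (one of the first `n` vertices) and the `(i, a)` entry of some
`g k * h k` is nonzero. -/
def HasArc {n m q : ℕ} (g : Fin q → Fin n → ℝ) (h : Fin q → Fin (n + m) → ℝ)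
    (a b : Fin (n + m)) : Prop :=
  ∃ (k : Fin q) (i : Fin n), b = Fin.castAdd m i ∧ g k i * h k a ≠ 0

/-- `𝔾` has a spanning forest rooted at the `m` input vertices `n+1, …, n+m`: every other
vertex is reachable from some input vertex by a directed path. -/
def HasSpanningForestAtInputs {n m q : ℕ} (g : Fin q → Fin n → ℝ)
    (h : Fin q → Fin (n + m) → ℝ) : Prop :=
  ∀ v : Fin (n + m), (¬ ∃ j : Fin m, Fin.natAdd n j = v) →
    ∃ j : Fin m, Relation.ReflTransGen (HasArc g h) (Fin.natAdd n j) v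

/-- A multi-colored subgraph of `𝔾`, encoded by the data of its `n` arcs: each of the
vertices `1, …, n` is the head of exactly one arc, with tail `t i` and color `c i`.
Injectivity of `t` and of `c` says no two arcs share a start vertex or a color (no two
share an end vertex by construction); such a spanning subgraph is exactly a disjoint union
of `m` directed path graphs (whose sources are the `m` input vertices) and directed cycle
graphs, with all arc colors distinct. -/
def IsMCS {n m q : ℕ} (g : Fin q → Fin n → ℝ) (h : Fin q → Fin (n + m) → ℝ)
    (t : Fin n → Fin (n + m)) (c : Fin n → Fin q) : Prop :=
  Function.Injective t ∧ Function.Injective c ∧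
    ∀ i : Fin n, g (c i) i * h (c i) (t i) ≠ 0

/-- A pure sink of the multi-colored subgraph with tail map `t`: a sink that is not a
source (i.e. has no outgoing arc, and is one of the first `n` vertices). -/
def IsPureSink {n m : ℕ} (t : Fin n → Fin (n + m)) (v : Fin (n + m)) : Prop :=
  (¬ ∃ i : Fin n, t i = v) ∧ ∃ i : Fin n, Fin.castAdd m i = v

/-- A pure source: a source (one of the last `m` vertices) that is not a sink. -/
def IsPureSource {n m : ℕ} (t : Fin n → Fin (n + m)) (v : Fin (n + m)) : Prop :=
  (∃ i : Fin n, t i = v) ∧ ∃ j : Fin m, Fin.natAdd n j = v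

/-- A matrimonial partition, encoded by a permutation `μ` that matches each pure sink with
a distinct pure source (the two-element cells are the pairs `{v, μ v}` for `v` a pure sink;
all other vertices lie in singleton cells). -/
def IsMatrimonial {n m : ℕ} (t : Fin n → Fin (n + m)) (μ : Equiv.Perm (Fin (n + m))) : Prop :=
  ∀ v, IsPureSink t v ↔ IsPureSource t (μ v)

/-- The successor map of the quotient of a multi-colored subgraph by a matrimonial
partition: each vertex with an outgoing arc is sent to the head of that arc, each pure
sink is welded to (sent to) its paired pure source, and isolated vertices stay put. -/
noncomputable def weldMap {n m : ℕ} (t : Fin n → Fin (n + m))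
    (μ : Equiv.Perm (Fin (n + m))) (v : Fin (n + m)) : Fin (n + m) :=
  if hv : ∃ i : Fin n, t i = v then Fin.castAdd m hv.choose
  else if ∃ i : Fin n, Fin.castAdd m i = v then μ v else v

/-- Number of orbits of a self-map of `Fin N`. -/
noncomputable def orbitCount {N : ℕ} (f : Fin N → Fin N) : ℕ :=
  (Set.range fun v => {w | ∃ a b : ℕ, f^[a] v = f^[b] w}).ncard

/-- Number of isolated vertices of a multi-colored subgraph (vertices that are both a
source and a sink). -/
noncomputable def isolatedCount {n m : ℕ} (t : Fin n → Fin (n + m)) : ℕ :=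
  {v : Fin (n + m) | (¬ ∃ i : Fin n, t i = v) ∧ ∃ j : Fin m, Fin.natAdd n j = v}.ncard

/-- The number of directed cycle graphs in the quotient of a multi-colored subgraph by a
matrimonial partition: every orbit of the weld map, except the (singleton) orbits of the
isolated vertices, yields exactly one cycle graph of the quotient. -/
noncomputable def quotCycleCount {n m : ℕ} (t : Fin n → Fin (n + m))
    (μ : Equiv.Perm (Fin (n + m))) : ℕ :=
  orbitCount (weldMap t μ) - isolatedCount t

/-- `𝔾` has an unbalanced similarity class of multi-colored subgraphs: for some
multi-colored subgraph `(t, c)` and some matrimonial partition `μ` for its class, the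
numbers of odd and of even multi-colored subgraphs in its similarity class (same sink set,
i.e. same `Set.range t`, and same color set `Set.range c`) differ. -/
def HasUnbalancedClass {n m q : ℕ} (g : Fin q → Fin n → ℝ)
    (h : Fin q → Fin (n + m) → ℝ) : Prop :=
  ∃ (t : Fin n → Fin (n + m)) (c : Fin n → Fin q) (μ : Equiv.Perm (Fin (n + m))),
    IsMCS g h t c ∧ IsMatrimonial t μ ∧
    {tc : (Fin n → Fin (n + m)) × (Fin n → Fin q) |
        IsMCS g h tc.1 tc.2 ∧ Set.range tc.1 = Set.range t ∧
        Set.range tc.2 = Set.range c ∧ Odd (quotCycleCount tc.1 μ)}.ncard ≠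
      {tc : (Fin n → Fin (n + m)) × (Fin n → Fin q) |
        IsMCS g h tc.1 tc.2 ∧ Set.range tc.1 = Set.range t ∧
        Set.range tc.2 = Set.range c ∧ Even (quotCycleCount tc.1 μ)}.ncard

/-- Arc set of the directed path graph whose vertices, in order, are the list `l`. -/
def pathArcs {V : Type*} (l : List V) : Set (V × V) :=
  {a | ∃ k : ℕ, l[k]? = some a.1 ∧ l[k + 1]? = some a.2}

/-- Arc set of the directed cycle graph whose vertices, in cyclic order, are the list `l`. -/
def cycleArcs {V : Type*} (l : List V) : Set (V × V) :=
  pathArcs l ∪ {a | ∃ x y, l.getLast? = some x ∧ l.head? = some y ∧ a = (x, y)}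

/-- A cactus graph with vertex set `W`, arc set `E` and root `r`: a trunk (a directed path
graph, possibly a single vertex, starting at `r`) together with any number of buds, each
bud being a directed cycle graph together with a stem arc from a vertex already in the
graph (on the trunk or on the cycle of another bud) to a vertex of the cycle. -/
inductive IsCactus {V : Type*} : Set V → Set (V × V) → V → Prop where
  | trunk (r : V) (l : List V) (hnd : l.Nodup) (hhead : l.head? = some r) :
      IsCactus {v | v ∈ l} (pathArcs l) r
  | bud (r : V) (W : Set V) (E : Set (V × V)) (l : List V) (w u : V)
      (hc : IsCactus W E r) (hnd : l.Nodup) (hne : l ≠ [])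
      (hdisj : ∀ v ∈ l, v ∉ W) (hw : w ∈ W) (hu : u ∈ l) :
      IsCactus (W ∪ {v | v ∈ l}) (E ∪ cycleArcs l ∪ {(w, u)}) r

/-- `𝔾` has a spanning subgraph which is a disjoint union of `m` cactus graphs rooted at
the `m` input vertices `n+1, …, n+m`, respectively. -/
def HasSpanningCacti {n m q : ℕ} (g : Fin q → Fin n → ℝ)
    (h : Fin q → Fin (n + m) → ℝ) : Prop :=
  ∃ (W : Fin m → Set (Fin (n + m))) (F : Fin m → Set (Fin (n + m) × Fin (n + m))),
    (∀ j, IsCactus (W j) (F j) (Fin.natAdd n j)) ∧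
    (∀ j, ∀ a ∈ F j, HasArc g h a.1 a.2) ∧
    Pairwise (fun j j' => Disjoint (W j) (W j')) ∧
    (⋃ j, W j) = Set.univ

/-- Rank of the submatrix `G_S` whose columns are the `g i`, `i ∈ S`. -/
noncomputable def rankCols {q n1 : ℕ} (g : Fin q → Fin n1 → ℝ) (S : Finset (Fin q)) : ℕ :=
  (Matrix.of fun (i : Fin n1) (k : {x // x ∈ S}) => g k.1 i).rank

/-- Rank of the submatrix `H_S` whose rows are the `h i`, `i ∈ S`. -/
noncomputable def rankRows {q n2 : ℕ} (h : Fin q → Fin n2 → ℝ) (S : Finset (Fin q)) : ℕ :=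
  (Matrix.of fun (k : {x // x ∈ S}) (j : Fin n2) => h k.1 j).rank

/-- `I` is a jointly independent index set of `(G, H)`: both `{g i : i ∈ I}` and
`{h i : i ∈ I}` are linearly independent families. -/
def JointlyIndependent {q n1 n2 : ℕ} (g : Fin q → Fin n1 → ℝ) (h : Fin q → Fin n2 → ℝ)
    (I : Finset (Fin q)) : Prop :=
  LinearIndependent ℝ (fun i : {x // x ∈ I} => g i.1) ∧
  LinearIndependent ℝ (fun i : {x // x ∈ I} => h i.1)

/-- Maximum cardinality of a nonempty jointly independent index set of `(G, H)`,
taken to be `0` if none exists. -/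
noncomputable def maxJointIndep {q n1 n2 : ℕ} (g : Fin q → Fin n1 → ℝ)
    (h : Fin q → Fin n2 → ℝ) : ℕ :=
  sSup (insert 0 {c : ℕ | ∃ I : Finset (Fin q), I.Nonempty ∧
    JointlyIndependent g h I ∧ I.card = c})

/-- Arcs of the transfer graph of `{G_𝐪, H_𝐪}`; vertex `0` is `none`, vertex `i ∈ 𝐪`
is `some i`.  There is an arc from `0` to `i` iff `h_{i2} ≠ 0`, and an arc from `j` to `i`
iff the scalar `h_{i1} g_j` is nonzero. -/
def TArc {n m q : ℕ} (g : Fin q → Fin n → ℝ) (h : Fin q → Fin (n + m) → ℝ) :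
    Option (Fin q) → Option (Fin q) → Prop
  | none, some i => ∃ j : Fin m, h i (Fin.natAdd n j) ≠ 0
  | some j, some i => (∑ l : Fin n, h i (Fin.castAdd m l) * g j l) ≠ 0
  | _, none => False

/-- The transfer graph has a spanning tree rooted at vertex `0`: every vertex `1, …, q`
is reachable from vertex `0` by a directed path. -/
def TransferRootedAtZero {n m q : ℕ} (g : Fin q → Fin n → ℝ)
    (h : Fin q → Fin (n + m) → ℝ) : Prop :=
  ∀ i : Fin q, Relation.ReflTransGen (TArc g h) none (some i)


section OIter

variable {V : Type*} (S : V → Option V)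

/-- Iteration of a partial successor map. -/
def oiter : ℕ → V → Option V
  | 0, v => some v
  | k+1, v => (S v).bind (oiter k)

lemma oiter_zero (v : V) : oiter S 0 v = some v := rfl

lemma oiter_succ (k : ℕ) (v : V) : oiter S (k+1) v = (S v).bind (oiter S k) := rfl

lemma oiter_add (a b : ℕ) (v : V) :
    oiter S (a + b) v = (oiter S a v).bind (oiter S b) := by
  induction a generalizing v with
  | zero => simp [oiter]
  | succ a ih =>
    rw [Nat.succ_add, oiter_succ, oiter_succ]
    cases S v <;> simp [ih]

lemma oiter_succ' (k : ℕ) (v : V) : oiter S (k+1) v = (oiter S k v).bind S := by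
  have h := oiter_add S k 1 v
  have h1 : ∀ x : V, oiter S 1 x = S x := by
    intro x; rw [oiter_succ]; cases S x <;> simp [oiter]
  rw [h]
  cases hx : oiter S k v <;> simp [h1]

lemma oiter_prefix {a : ℕ} (b : ℕ) {v w : V} (h : oiter S (a + b) v = some w) :
    ∃ x, oiter S a v = some x := by
  rw [oiter_add] at h
  cases hx : oiter S a v with
  | none => rw [hx] at h; simp at h
  | some x => exact ⟨x, rfl⟩

variable {S}
variable (hS : ∀ ⦃v v' w : V⦄, S v = some w → S v' = some w → v = v')

include hS in
lemma oiter_cancel : ∀ (a : ℕ) {c : ℕ} {v w x : V}, oiter S a v = some x →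
    oiter S (c + a) w = some x → oiter S c w = some v := by
  intro a
  induction a with
  | zero =>
    intro c v w x h1 h2
    rw [oiter_zero, Option.some.injEq] at h1
    rw [Nat.add_zero] at h2
    rw [h1]; exact h2
  | succ a ih =>
    intro c v w x h1 h2
    rw [oiter_succ'] at h1
    rw [show c + (a+1) = (c+a)+1 by ring, oiter_succ'] at h2
    cases hy : oiter S a v with
    | none => rw [hy] at h1; simp at h1
    | some y =>
      cases hy' : oiter S (c+a) w with
      | none => rw [hy'] at h2; simp at h2
      | some y' =>
        rw [hy, Option.bind] at h1; rw [hy', Option.bind] at h2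
        have := hS h1 h2
        subst this
        exact ih hy hy'

end OIter

section Smap

variable {n m q : ℕ} {g : Fin q → Fin n → ℝ} {h : Fin q → Fin (n + m) → ℝ}
variable (t : Fin n → Fin (n + m)) {c : Fin n → Fin q}

/-- The successor (head of the unique outgoing arc) map of a multi-colored subgraph. -/
noncomputable def Smap : Fin (n + m) → Option (Fin (n + m)) := fun v =>
  if hv : ∃ i : Fin n, t i = v then some (Fin.castAdd m hv.choose) else none

variable {t}

lemma Smap_eq_some {v w : Fin (n + m)} (hsw : Smap t v = some w) :
    ∃ i : Fin n, t i = v ∧ Fin.castAdd m i = w := by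
  unfold Smap at hsw
  split at hsw
  · next hv =>
    exact ⟨hv.choose, hv.choose_spec, (Option.some.injEq _ _).mp hsw⟩
  · simp at hsw

lemma Smap_back : ∀ ⦃v v' w : Fin (n + m)⦄,
    Smap t v = some w → Smap t v' = some w → v = v' := by
  intro v v' w h1 h2
  obtain ⟨i, hti, hci⟩ := Smap_eq_some h1
  obtain ⟨i', hti', hci'⟩ := Smap_eq_some h2
  have : i = i' := by
    have : (Fin.castAdd m i : Fin (n + m)) = Fin.castAdd m i' := by rw [hci, hci']
    exact Fin.ext (by simpa using congrArg Fin.val this)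
  rw [← hti, ← hti', this]

lemma Smap_t (ht : Function.Injective t) (i : Fin n) :
    Smap t (t i) = some (Fin.castAdd m i) := by
  have hv : ∃ i' : Fin n, t i' = t i := ⟨i, rfl⟩
  have hch : hv.choose = i := ht hv.choose_spec
  unfold Smap
  rw [dif_pos hv, hch]

lemma Smap_arc (hMCS : IsMCS g h t c) {v w : Fin (n + m)} (hsw : Smap t v = some w) :
    HasArc g h v w := by
  obtain ⟨i, hti, hci⟩ := Smap_eq_some hsw
  refine ⟨c i, i, hci.symm, ?_⟩
  rw [← hti]
  exact hMCS.2.2 i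

lemma Smap_ne_natAdd {v w : Fin (n + m)} (hsw : Smap t v = some w) (j : Fin m) :
    Fin.natAdd n j ≠ w := by
  obtain ⟨i, _, hci⟩ := Smap_eq_some hsw
  intro hcon
  rw [← hci] at hcon
  have := congrArg Fin.val hcon
  simp only [Fin.coe_natAdd, Fin.coe_castAdd] at this
  have := i.isLt
  omega

lemma vertex_cases (v : Fin (n + m)) :
    (∃ i : Fin n, Fin.castAdd m i = v) ∨ ∃ j : Fin m, Fin.natAdd n j = v := by
  by_cases hv : (v : ℕ) < n
  · exact Or.inl ⟨⟨v, hv⟩, by ext; simp⟩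
  · refine Or.inr ⟨⟨(v : ℕ) - n, by omega⟩, ?_⟩
    ext
    simp [Fin.coe_natAdd]
    omega

/-- The predecessor map (on state vertices). -/
noncomputable def Pmap : Fin (n + m) → Fin (n + m) := fun w =>
  if hw : ∃ i : Fin n, Fin.castAdd m i = w then t hw.choose else w

lemma Smap_Pmap (ht : Function.Injective t)
    (hall : ∀ i : Fin n, ∃ i' : Fin n, t i' = Fin.castAdd m i)
    {w : Fin (n + m)} (hw : ∃ i : Fin n, Fin.castAdd m i = w) :
    False ∨ True := Or.inr trivial

end Smap


section Reach

variable {V : Type*}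

lemma pathArcs_reach (l : List V) :
    ∀ {b a : ℕ} {x y : V}, a ≤ b → l[a]? = some x → l[b]? = some y →
      Relation.ReflTransGen (fun p r => (p, r) ∈ pathArcs l) x y := by
  intro b
  induction b with
  | zero =>
    intro a x y hab hx hy
    interval_cases a
    rw [hx] at hy
    cases hy
    exact Relation.ReflTransGen.refl
  | succ b ih =>
    intro a x y hab hx hy
    rcases Nat.eq_or_lt_of_le hab with hab | hab
    · subst hab; rw [hx] at hy; cases hy; exact Relation.ReflTransGen.refl
    · have hb1 : b + 1 < l.length := by
        by_contra hcon
        rw [List.getElem?_eq_none (by omega)] at hy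
        simp at hy
      have hz : l[b]? = some l[b] := List.getElem?_eq_getElem (by omega)
      have hreach := ih (by omega) hx hz
      exact hreach.tail ⟨b, hz, hy⟩

lemma mem_getElem? {l : List V} {x : V} (hx : x ∈ l) : ∃ k : ℕ, l[k]? = some x := by
  obtain ⟨k, hk, he⟩ := List.mem_iff_getElem.mp hx
  exact ⟨k, by rw [List.getElem?_eq_getElem hk, he]⟩

lemma cycleArcs_reach (l : List V) (hne : l ≠ []) {x y : V} (hx : x ∈ l) (hy : y ∈ l) :
    Relation.ReflTransGen (fun p r => (p, r) ∈ cycleArcs l) x y := by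
  obtain ⟨a, ha⟩ := mem_getElem? hx
  obtain ⟨b, hb⟩ := mem_getElem? hy
  have hmono : ∀ {u v : V}, Relation.ReflTransGen (fun p r => (p, r) ∈ pathArcs l) u v →
      Relation.ReflTransGen (fun p r => (p, r) ∈ cycleArcs l) u v := by
    intro u v huv
    exact Relation.ReflTransGen.mono (fun p r hpr => Or.inl hpr) _ _ huv
  rcases le_total a b with hab | hab
  · exact hmono (pathArcs_reach l hab ha hb)
  · -- go to the last element, wrap around, then forward
    have hlen : 0 < l.length := List.length_pos_iff.mpr hne
    have halen : a < l.length := by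
      by_contra hcon
      rw [List.getElem?_eq_none (by omega)] at ha
      simp at ha
    have hlast : l[l.length - 1]? = some (l.getLast hne) := by
      rw [List.getElem?_eq_getElem (by omega)]
      rw [List.getLast_eq_getElem]
    have h1 : Relation.ReflTransGen (fun p r => (p, r) ∈ cycleArcs l) x (l.getLast hne) :=
      hmono (pathArcs_reach l (by omega) ha hlast)
    have hhead : l.head? = some (l.head hne) := List.head?_eq_head hne
    have harc : ((l.getLast hne, l.head hne) : V × V) ∈ cycleArcs l := by
      right
      exact ⟨l.getLast hne, l.head hne, List.getLast?_eq_getLast hne, hhead, rfl⟩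
    have h2 := h1.tail harc
    have hhead0 : l[0]? = some (l.head hne) := by
      rw [List.head?_eq_getElem?] at hhead; exact hhead
    exact h2.trans (hmono (pathArcs_reach l (Nat.zero_le b) hhead0 hb))

lemma cactus_root_mem {W : Set V} {E : Set (V × V)} {r : V} (hc : IsCactus W E r) :
    r ∈ W := by
  induction hc with
  | trunk r l hnd hhead =>
    exact List.mem_of_mem_head? (show r ∈ l.head? from by rw [hhead]; exact Option.mem_def.mpr rfl)
  | bud r W E l w u hc hnd hne hdisj hw hu ih => exact Or.inl ih

lemma cactus_reach {W : Set V} {E : Set (V × V)} {r : V} (hc : IsCactus W E r) :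
    ∀ v ∈ W, Relation.ReflTransGen (fun p s => (p, s) ∈ E) r v := by
  induction hc with
  | trunk r l hnd hhead =>
    intro v hv
    have hr : l[0]? = some r := by rw [← List.head?_eq_getElem?]; exact hhead
    obtain ⟨b, hb⟩ := mem_getElem? hv
    exact pathArcs_reach l (Nat.zero_le b) hr hb
  | bud r W E l w u hc hnd hne hdisj hw hu ih =>
    intro v hv
    have hmono : ∀ {x y : V}, Relation.ReflTransGen (fun p s => (p, s) ∈ E) x y →
        Relation.ReflTransGen
          (fun p s => (p, s) ∈ E ∪ cycleArcs l ∪ {(w, u)}) x y := by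
      intro x y hxy
      exact Relation.ReflTransGen.mono (fun p s hps => Or.inl (Or.inl hps)) _ _ hxy
    rcases hv with hv | hv
    · exact hmono (ih v hv)
    · have h1 := hmono (ih w hw)
      have h2 := h1.tail (show ((w, u) : V × V) ∈ _ from Or.inr rfl)
      refine h2.trans ?_
      exact Relation.ReflTransGen.mono (fun p s hps => Or.inl (Or.inr hps)) _ _ (cycleArcs_reach l hne hu hv)

lemma cross_boundary {R : V → V → Prop} {U : Set V} {a b : V}
    (hab : Relation.ReflTransGen R a b) (ha : a ∈ U) (hb : b ∉ U) :
    ∃ w u, w ∈ U ∧ u ∉ U ∧ R w u := by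
  induction hab with
  | refl => exact absurd ha hb
  | @tail y z hay hyz ih =>
    by_cases hy : y ∈ U
    · exact ⟨y, z, hy, hb, hyz⟩
    · exact ih hy

end Reach

lemma forest_of_cacti {n m q : ℕ} {g : Fin q → Fin n → ℝ} {h : Fin q → Fin (n + m) → ℝ}
    (hc : HasSpanningCacti g h) : HasSpanningForestAtInputs g h := by
  obtain ⟨W, F, hcact, harcs, hdisj, huniv⟩ := hc
  intro v _
  have hv : v ∈ ⋃ j, W j := by rw [huniv]; trivial
  obtain ⟨j, hj⟩ := Set.mem_iUnion.mp hv
  refine ⟨j, ?_⟩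
  exact Relation.ReflTransGen.mono (fun p s hps => harcs j (p, s) hps) _ _ (cactus_reach (hcact j) v hj)


section Main

variable {n m q : ℕ} {g : Fin q → Fin n → ℝ} {h : Fin q → Fin (n + m) → ℝ}
variable {t : Fin n → Fin (n + m)} {c : Fin n → Fin q}

lemma getElem?_rangeMap {V : Type*} (f : ℕ → V) (len k : ℕ) :
    ((List.range len).map f)[k]? = if k < len then some (f k) else none := by
  by_cases hk : k < len
  · rw [if_pos hk, List.getElem?_map,
      List.getElem?_eq_getElem (by simpa using hk), List.getElem_range]
    rfl
  · rw [if_neg hk, List.getElem?_map, List.getElem?_eq_none (by simpa using hk)]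
    rfl

lemma mem_rangeMap {V : Type*} {f : ℕ → V} {len : ℕ} {v : V} :
    v ∈ (List.range len).map f ↔ ∃ a, a < len ∧ f a = v := by
  simp [List.mem_map]

lemma pathArcs_S {V : Type*} (S : V → Option V) (f : ℕ → V) (len : ℕ)
    (hf : ∀ k, k + 1 < len → S (f k) = some (f (k + 1))) :
    ∀ a ∈ pathArcs ((List.range len).map f), S a.1 = some a.2 := by
  rintro ⟨x, y⟩ ⟨k, hk1, hk2⟩
  rw [getElem?_rangeMap] at hk1 hk2
  by_cases hlt : k + 1 < len
  · rw [if_pos hlt] at hk2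
    rw [if_pos (by omega)] at hk1
    cases hk1; cases hk2
    exact hf k hlt
  · rw [if_neg hlt] at hk2
    simp at hk2

/-- Attach one cycle: a cycle through `u` avoiding `U`, whose arcs are graph arcs and
which is closed under taking predecessors. -/
lemma cycle_attach (hMCS : IsMCS g h t c) {U : Set (Fin (n + m))} {u : Fin (n + m)}
    (hu : u ∉ U) (hcyc : ∃ d, 0 < d ∧ oiter (Smap t) d u = some u)
    (hclosed : ∀ v, v ∉ U → ∀ w, Smap t v = some w → w ∉ U) :
    ∃ l : List (Fin (n + m)), l.Nodup ∧ l ≠ [] ∧ u ∈ l ∧ (∀ v ∈ l, v ∉ U) ∧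
      (∀ a ∈ cycleArcs l, HasArc g h a.1 a.2) ∧
      (∀ v x, Smap t v = some x → x ∈ l → v ∈ l) := by
  classical
  set S := Smap t with hSdef
  set per := Nat.find hcyc with hperdef
  have hper : 0 < per ∧ oiter S per u = some u := Nat.find_spec hcyc
  have hsome : ∀ a, a ≤ per → ∃ x, oiter S a u = some x := by
    intro a ha
    exact oiter_prefix S (per - a) (by rw [Nat.add_sub_cancel' ha]; exact hper.2)
  set orbu : ℕ → Fin (n + m) := fun a => (oiter S a u).getD u with horbdef
  have horbu : ∀ a, a ≤ per → oiter S a u = some (orbu a) := by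
    intro a ha
    obtain ⟨x, hx⟩ := hsome a ha
    rw [hx]; simp [horbdef, hx]
  have horbu0 : orbu 0 = u := by simp [horbdef, oiter_zero]
  set l : List (Fin (n + m)) := (List.range per).map orbu with hldef
  have hmeml : ∀ {v}, v ∈ l ↔ ∃ a, a < per ∧ orbu a = v := by
    intro v; rw [hldef]; exact mem_rangeMap
  -- successor steps around the cycle
  have hstep : ∀ k, k + 1 ≤ per → S (orbu k) = some (orbu (k + 1)) := by
    intro k hk
    have h1 := horbu (k + 1) hk
    rw [oiter_succ', horbu k (by omega)] at h1
    exact h1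
  have hwrap : S (orbu (per - 1)) = some u := by
    have h1 := hper.2
    rw [show per = (per - 1) + 1 by omega, oiter_succ', horbu (per - 1) (by omega)] at h1
    exact h1
  -- orbit avoids U
  have horbit : ∀ a x, oiter S a u = some x → x ∉ U := by
    intro a
    induction a with
    | zero => intro x hx; rw [oiter_zero, Option.some.injEq] at hx; rwa [← hx]
    | succ a ih =>
      intro x hx
      rw [oiter_succ'] at hx
      cases hy : oiter S a u with
      | none => rw [hy] at hx; simp at hx
      | some y =>
        rw [hy, Option.bind] at hx
        exact hclosed y (ih y hy) x hx
  refine ⟨l, ?_, ?_, ?_, ?_, ?_, ?_⟩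
  · -- Nodup
    rw [hldef]
    refine List.Nodup.map_on ?_ List.nodup_range
    intro a ha b hb hab
    rw [List.mem_range] at ha hb
    -- wlog a ≤ b
    have key : ∀ a b : ℕ, a < per → b < per → a ≤ b → orbu a = orbu b → a = b := by
      intro a b ha hb hab heq
      by_contra hne
      have h1 := horbu a (by omega)
      have h2 : oiter S ((b - a) + a) u = some (orbu a) := by
        rw [Nat.sub_add_cancel hab, heq]; exact horbu b (by omega)
      have hcan := oiter_cancel Smap_back a h1 h2
      have := Nat.find_min hcyc (show b - a < per by omega)
      exact this ⟨by omega, hcan⟩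
    rcases le_total a b with hle | hle
    · exact key a b ha hb hle hab
    · exact (key b a hb ha hle hab.symm).symm
  · -- nonempty
    rw [hldef]
    intro hcon
    have := congrArg List.length hcon
    simp at this
    omega
  · exact hmeml.mpr ⟨0, hper.1, horbu0⟩
  · intro v hv
    obtain ⟨a, ha, hav⟩ := hmeml.mp hv
    exact hav ▸ horbit a (orbu a) (horbu a (by omega))
  · -- arcs
    rintro ⟨x, y⟩ (hp | hw)
    · have := pathArcs_S S orbu per (fun k hk => hstep k (by omega)) (x, y) hp
      exact Smap_arc hMCS this
    · obtain ⟨x', y', hlast, hhead, heq⟩ := hw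
      have hlen : l.length = per := by rw [hldef]; simp
      have hlast' : l.getLast? = some (orbu (per - 1)) := by
        rw [List.getLast?_eq_getElem?, hlen, hldef, getElem?_rangeMap, if_pos (by omega)]
      have hhead' : l.head? = some u := by
        rw [List.head?_eq_getElem?, hldef, getElem?_rangeMap, if_pos hper.1, horbu0]
      rw [hlast'] at hlast; rw [hhead'] at hhead
      cases hlast; cases hhead
      cases heq
      exact Smap_arc hMCS hwrap
  · -- predecessor closure
    intro v x hsx hxl
    obtain ⟨a, ha, hax⟩ := hmeml.mp hxl
    cases a with
    | zero =>
      rw [horbu0] at hax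
      have hv : v = orbu (per - 1) := Smap_back hsx (by rw [hax] at hwrap; exact hwrap)
      exact hmeml.mpr ⟨per - 1, by omega, hv.symm⟩
    | succ a' =>
      have hs' : S (orbu a') = some x := by rw [← hax]; exact hstep a' (by omega)
      have hv : v = orbu a' := Smap_back hsx hs'
      exact hmeml.mpr ⟨a', by omega, hv.symm⟩

/-- The attachment loop: grow the cacti until they span. -/
lemma attach_loop (hMCS : IsMCS g h t c) (hforest : HasSpanningForestAtInputs g h) :
    ∀ (k : ℕ) (W : Fin m → Set (Fin (n + m)))
      (F : Fin m → Set (Fin (n + m) × Fin (n + m))),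
      (∀ j, IsCactus (W j) (F j) (Fin.natAdd n j)) →
      (∀ j, ∀ a ∈ F j, HasArc g h a.1 a.2) →
      Pairwise (fun j j' => Disjoint (W j) (W j')) →
      (∀ v, v ∉ (⋃ j, W j) → (∃ d, 0 < d ∧ oiter (Smap t) d v = some v) ∧
          ∀ w, Smap t v = some w → w ∉ (⋃ j, W j)) →
      (Set.univ \ ⋃ j, W j).ncard ≤ k →
      HasSpanningCacti g h := by
  intro k
  induction k with
  | zero =>
    intro W F hcact harc hdisj hinv hcard
    have hempty : (Set.univ \ ⋃ j, W j) = ∅ :=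
      (Set.ncard_eq_zero (Set.toFinite _)).mp (Nat.le_zero.mp hcard)
    exact ⟨W, F, hcact, harc, hdisj,
      Set.univ_subset_iff.mp (Set.diff_eq_empty.mp hempty)⟩
  | succ k ih =>
    intro W F hcact harc hdisj hinv hcard
    by_cases hUuniv : (⋃ j, W j) = Set.univ
    · exact ⟨W, F, hcact, harc, hdisj, hUuniv⟩
    obtain ⟨v₀, hv₀⟩ := Set.ne_univ_iff_exists_notMem _ |>.mp hUuniv
    have hroot_mem : ∀ j : Fin m, Fin.natAdd n j ∈ ⋃ j', W j' :=
      fun j => Set.mem_iUnion.mpr ⟨j, cactus_root_mem (hcact j)⟩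
    have hv₀in : ¬ ∃ j : Fin m, Fin.natAdd n j = v₀ := by
      rintro ⟨j, rfl⟩
      exact hv₀ (hroot_mem j)
    obtain ⟨j₀, hreach⟩ := hforest v₀ hv₀in
    obtain ⟨w, u, hwU, huU, harcwu⟩ := cross_boundary hreach (hroot_mem j₀) hv₀
    obtain ⟨l, hnd, hne, hul, hlU, hlarcs, hlpred⟩ :=
      cycle_attach hMCS huU (hinv u huU).1 (fun v hv => (hinv v hv).2)
    obtain ⟨j₁, hj₁w⟩ := Set.mem_iUnion.mp hwU
    set W' := Function.update W j₁ (W j₁ ∪ {v | v ∈ l}) with hW'def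
    set F' := Function.update F j₁ (F j₁ ∪ cycleArcs l ∪ {(w, u)}) with hF'def
    have hUW' : (⋃ j, W' j) = (⋃ j, W j) ∪ {v | v ∈ l} := by
      ext x
      simp only [Set.mem_iUnion, Set.mem_union]
      constructor
      · rintro ⟨j, hj⟩
        by_cases hjj : j = j₁
        · subst hjj
          rw [hW'def, Function.update_self] at hj
          rcases hj with hj | hj
          · exact Or.inl ⟨j, hj⟩
          · exact Or.inr hj
        · rw [hW'def, Function.update_of_ne hjj] at hj
          exact Or.inl ⟨j, hj⟩
      · rintro (⟨j, hj⟩ | hx)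
        · by_cases hjj : j = j₁
          · subst hjj
            exact ⟨j, by rw [hW'def, Function.update_self]; exact Or.inl hj⟩
          · exact ⟨j, by rw [hW'def, Function.update_of_ne hjj]; exact hj⟩
        · exact ⟨j₁, by rw [hW'def, Function.update_self]; exact Or.inr hx⟩
    have hlnotU : ∀ v ∈ l, v ∉ ⋃ j, W j := hlU
    refine ih W' F' ?_ ?_ ?_ ?_ ?_
    · -- cacti
      intro j
      by_cases hjj : j = j₁
      · subst hjj
        rw [hW'def, hF'def, Function.update_self, Function.update_self]
        exact IsCactus.bud _ _ _ l w u (hcact j) hnd hne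
          (fun v hv hvW => hlnotU v hv (Set.mem_iUnion.mpr ⟨j, hvW⟩)) hj₁w hul
      · rw [hW'def, hF'def, Function.update_of_ne hjj, Function.update_of_ne hjj]
        exact hcact j
    · -- arcs
      intro j a ha
      by_cases hjj : j = j₁
      · subst hjj
        rw [hF'def, Function.update_self] at ha
        rcases ha with (ha | ha) | ha
        · exact harc _ a ha
        · exact hlarcs a ha
        · rw [Set.mem_singleton_iff] at ha
          rw [ha]
          exact harcwu
      · rw [hF'def, Function.update_of_ne hjj] at ha
        exact harc j a ha
    · -- pairwise disjoint
      intro j j' hjj'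
      have hdisjlW : ∀ j'', Disjoint {v : Fin (n + m) | v ∈ l} (W j'') := by
        intro j''
        rw [Set.disjoint_left]
        intro v hv hvW
        exact hlnotU v hv (Set.mem_iUnion.mpr ⟨j'', hvW⟩)
      by_cases hj : j = j₁ <;> by_cases hj' : j' = j₁
      · exact absurd (hj.trans hj'.symm) hjj'
      · subst hj
        rw [hW'def, Function.update_self, Function.update_of_ne hj']
        exact Set.disjoint_union_left.mpr ⟨hdisj hjj', hdisjlW j'⟩
      · subst hj'
        rw [hW'def, Function.update_self, Function.update_of_ne hj]
        exact Set.disjoint_union_right.mpr ⟨hdisj hjj', (hdisjlW j).symm⟩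
      · rw [hW'def, Function.update_of_ne hj, Function.update_of_ne hj']
        exact hdisj hjj'
    · -- invariant
      intro v hv
      rw [hUW'] at hv
      have hvU : v ∉ ⋃ j, W j := fun hc => hv (Or.inl hc)
      have hvl : v ∉ {x : Fin (n + m) | x ∈ l} := fun hc => hv (Or.inr hc)
      refine ⟨(hinv v hvU).1, ?_⟩
      intro x hx
      rw [hUW']
      rintro (hxU | hxl)
      · exact (hinv v hvU).2 x hx hxU
      · exact hvl (hlpred v x hx hxl)
    · -- cardinality decrease
      have hssub : (Set.univ \ ⋃ j, W' j) ⊂ (Set.univ \ ⋃ j, W j) := by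
        rw [hUW']
        constructor
        · intro x hx
          exact ⟨hx.1, fun hc => hx.2 (Or.inl hc)⟩
        · intro hcon
          have hu1 : u ∈ Set.univ \ ⋃ j, W j := ⟨trivial, huU⟩
          have hu2 := hcon hu1
          exact hu2.2 (Or.inr hul)
      have := Set.ncard_lt_ncard hssub (Set.toFinite _)
      omega

end Main


section Final

variable {n m q : ℕ} {g : Fin q → Fin n → ℝ} {h : Fin q → Fin (n + m) → ℝ}
variable {t : Fin n → Fin (n + m)} {c : Fin n → Fin q}

lemma cacti_of_forest (hMCS : IsMCS g h t c) (hforest : HasSpanningForestAtInputs g h) :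
    HasSpanningCacti g h := by
  classical
  have ht : Function.Injective t := hMCS.1
  set S := Smap t with hSdef
  set r : Fin m → Fin (n + m) := fun j => Fin.natAdd n j with hrdef
  have hroot_nopred : ∀ (j : Fin m) (y : Fin (n + m)), S y ≠ some (r j) :=
    fun j y hy => (Smap_ne_natAdd hy j) rfl
  -- injectivity along the trunks
  have hroot_inj : ∀ {a b : ℕ} {j j' : Fin m} {x : Fin (n + m)},
      oiter S a (r j) = some x → oiter S b (r j') = some x → a = b ∧ j = j' := by
    have haux : ∀ (a b : ℕ) (j j' : Fin m) (x : Fin (n + m)), a ≤ b →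
        oiter S a (r j) = some x → oiter S b (r j') = some x → a = b ∧ j = j' := by
      intro a b j j' x hab h1 h2
      have h2' : oiter S ((b - a) + a) (r j') = some x := by
        rw [Nat.sub_add_cancel hab]; exact h2
      have hcan := oiter_cancel Smap_back a h1 h2'
      cases hd : b - a with
      | zero =>
        rw [hd, oiter_zero, Option.some.injEq] at hcan
        have hj : j' = j := by
          have := congrArg Fin.val hcan
          simp only [hrdef, Fin.coe_natAdd] at this
          exact Fin.ext (by omega)
        exact ⟨by omega, hj.symm⟩
      | succ d =>
        rw [hd, oiter_succ'] at hcan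
        cases hy : oiter S d (r j') with
        | none => rw [hy] at hcan; simp at hcan
        | some y =>
          rw [hy, Option.bind] at hcan
          exact absurd hcan (hroot_nopred j y)
    intro a b j j' x h1 h2
    rcases le_total a b with hab | hab
    · exact haux a b j j' x hab h1 h2
    · obtain ⟨hba, hjj⟩ := haux b a j' j x hab h2 h1
      exact ⟨hba.symm, hjj.symm⟩
  -- the trunks terminate
  have hnone : ∀ j : Fin m, ∃ k, oiter S k (r j) = none := by
    intro j
    by_contra hcon
    push_neg at hcon
    set f : Fin (n + m + 1) → Fin (n + m) := fun a =>
      (oiter S a (r j)).get (Option.ne_none_iff_isSome.mp (hcon a)) with hfdef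
    obtain ⟨a, b, hab, heq⟩ := Fintype.exists_ne_map_eq_of_card_lt f (by simp)
    have ha : oiter S (a : ℕ) (r j) = some (f a) := (Option.some_get _).symm
    have hb : oiter S (b : ℕ) (r j) = some (f b) := (Option.some_get _).symm
    rw [heq] at ha
    have := (hroot_inj ha hb).1
    exact hab (Fin.ext this)
  set plen : Fin m → ℕ := fun j => Nat.find (hnone j) with hplendef
  have hplen_spec : ∀ j, oiter S (plen j) (r j) = none := fun j => Nat.find_spec (hnone j)
  have hplen_min : ∀ j a, a < plen j → oiter S a (r j) ≠ none :=
    fun j a ha => Nat.find_min (hnone j) ha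
  have hplen_pos : ∀ j, 0 < plen j := by
    intro j
    rcases Nat.eq_zero_or_pos (plen j) with h0 | h0
    · exact absurd (h0 ▸ hplen_spec j) (by rw [oiter_zero]; exact fun hc => by simp at hc)
    · exact h0
  have hlt_plen : ∀ j a x, oiter S a (r j) = some x → a < plen j := by
    intro j a x hx
    by_contra hcon
    push_neg at hcon
    rw [show a = plen j + (a - plen j) by omega, oiter_add, hplen_spec j] at hx
    simp at hx
  have hsome : ∀ j a, a < plen j → ∃ x, oiter S a (r j) = some x := by
    intro j a ha
    exact Option.ne_none_iff_exists'.mp (hplen_min j a ha)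
  set orbp : Fin m → ℕ → Fin (n + m) := fun j a => (oiter S a (r j)).getD (r j) with horbpdef
  have horbp : ∀ j a, a < plen j → oiter S a (r j) = some (orbp j a) := by
    intro j a ha
    obtain ⟨x, hx⟩ := hsome j a ha
    rw [hx]; simp [horbpdef, hx]
  have horbp0 : ∀ j, orbp j 0 = r j := by intro j; simp [horbpdef, oiter_zero]
  set Lp : Fin m → List (Fin (n + m)) := fun j => (List.range (plen j)).map (orbp j)
    with hLpdef
  have hmemLp : ∀ {j v}, v ∈ Lp j ↔ ∃ a, a < plen j ∧ orbp j a = v := by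
    intro j v; rw [hLpdef]; exact mem_rangeMap
  set W0 : Fin m → Set (Fin (n + m)) := fun j => {v | v ∈ Lp j} with hW0def
  set F0 : Fin m → Set (Fin (n + m) × Fin (n + m)) := fun j => pathArcs (Lp j) with hF0def
  have hU0mem : ∀ {v}, v ∈ (⋃ j, W0 j) ↔
      ∃ j a, a < plen j ∧ oiter S a (r j) = some v := by
    intro v
    rw [Set.mem_iUnion]
    constructor
    · rintro ⟨j, hj⟩
      obtain ⟨a, ha, hav⟩ := hmemLp.mp hj
      exact ⟨j, a, ha, by rw [horbp j a ha, hav]⟩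
    · rintro ⟨j, a, ha, hav⟩
      refine ⟨j, hmemLp.mpr ⟨a, ha, ?_⟩⟩
      rw [horbp j a ha, Option.some.injEq] at hav
      exact hav
  have hroot_memU0 : ∀ j, r j ∈ ⋃ j', W0 j' := by
    intro j
    exact hU0mem.mpr ⟨j, 0, hplen_pos j, oiter_zero S (r j)⟩
  -- the invariant for the initial trunks
  have hclosed0 : ∀ v, v ∉ (⋃ j, W0 j) → ∀ w, S v = some w → w ∉ (⋃ j, W0 j) := by
    intro v hv w hw hmem
    obtain ⟨j, a, ha, hav⟩ := hU0mem.mp hmem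
    cases a with
    | zero =>
      rw [oiter_zero, Option.some.injEq] at hav
      exact hroot_nopred j v (by rw [← hav] at hw; exact hw)
    | succ a' =>
      have ha' : a' < plen j := by omega
      have hsucc : oiter S (a' + 1) (r j) = some w := hav
      rw [oiter_succ', horbp j a' ha', Option.bind] at hsucc
      have hveq : v = orbp j a' := Smap_back hw hsucc
      exact hv (hU0mem.mpr ⟨j, a', ha', by rw [horbp j a' ha', hveq]⟩)
  -- every vertex off the trunks is on a cycle
  have hcyc0 : ∀ v, v ∉ (⋃ j, W0 j) → ∃ d, 0 < d ∧ oiter S d v = some v := by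
    intro v hv
    set P : Fin (n + m) → Fin (n + m) := fun w =>
      if hw : ∃ i : Fin n, Fin.castAdd m i = w then t hw.choose else w with hPdef
    have hP : ∀ w, (∃ i : Fin n, Fin.castAdd m i = w) → S (P w) = some w := by
      intro w hw
      rw [hPdef]
      simp only [dif_pos hw]
      rw [hSdef, Smap_t ht hw.choose, hw.choose_spec]
    set pc : ℕ → Fin (n + m) := fun k => P^[k] v with hpcdef
    have hpc_succ : ∀ k, pc (k + 1) = P (pc k) := by
      intro k; rw [hpcdef]; exact Function.iterate_succ_apply' P k v
    have hnotmem : ∀ k, pc k ∉ (⋃ j, W0 j) := by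
      intro k
      induction k with
      | zero => exact hv
      | succ k ih =>
        have hstate : ∃ i : Fin n, Fin.castAdd m i = pc k := by
          rcases vertex_cases (pc k) with hs | ⟨j, hj⟩
          · exact hs
          · exact absurd (hj ▸ hroot_memU0 j) ih
        have hSk : S (pc (k + 1)) = some (pc k) := by
          rw [hpc_succ k]; exact hP (pc k) hstate
        intro hmem
        obtain ⟨j, a, ha, hav⟩ := hU0mem.mp hmem
        have hsucc : oiter S (a + 1) (r j) = some (pc k) := by
          rw [oiter_succ', hav, Option.bind]; exact hSk
        exact ih (hU0mem.mpr ⟨j, a + 1, hlt_plen j (a + 1) _ hsucc, hsucc⟩)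
    have hstate : ∀ k, ∃ i : Fin n, Fin.castAdd m i = pc k := by
      intro k
      rcases vertex_cases (pc k) with hs | ⟨j, hj⟩
      · exact hs
      · exact absurd (hj ▸ hroot_memU0 j) (hnotmem k)
    have hSfact : ∀ k, S (pc (k + 1)) = some (pc k) := by
      intro k; rw [hpc_succ k]; exact hP (pc k) (hstate k)
    have hback : ∀ d k, d ≤ k → oiter S d (pc k) = some (pc (k - d)) := by
      intro d
      induction d with
      | zero => intro k _; rw [oiter_zero, Nat.sub_zero]
      | succ d ih =>
        intro k hdk
        have hk1 : S (pc k) = some (pc (k - 1)) := by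
          have := hSfact (k - 1)
          rwa [show k - 1 + 1 = k by omega] at this
        rw [oiter_succ, hk1, Option.bind, ih (k - 1) (by omega),
          show k - 1 - d = k - (d + 1) by omega]
    have key : ∀ a b : ℕ, a < b → pc a = pc b → ∃ d, 0 < d ∧ oiter S d v = some v := by
      intro a b hab heq
      have hper : oiter S (b - a) (pc b) = some (pc b) := by
        rw [hback (b - a) b (by omega), show b - (b - a) = a by omega, heq]
      have hv0 : oiter S b (pc b) = some v := by
        rw [hback b b le_rfl, Nat.sub_self]
        rfl
      refine ⟨b - a, by omega, ?_⟩
      have e1 : oiter S (b + (b - a)) (pc b) = oiter S (b - a) v := by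
        rw [oiter_add, hv0, Option.bind]
      have e2 : oiter S ((b - a) + b) (pc b) = some v := by
        rw [oiter_add, hper, Option.bind, hv0]
      rw [← e1, show b + (b - a) = (b - a) + b by omega, e2]
    obtain ⟨a, b, hab, heq⟩ := Fintype.exists_ne_map_eq_of_card_lt
      (fun a : Fin (n + m + 1) => pc a) (by simp)
    rcases lt_or_gt_of_ne (fun hc : (a : ℕ) = (b : ℕ) => hab (Fin.ext hc)) with hlt | hlt
    · exact key a b hlt heq
    · exact key b a hlt heq.symm
  -- initial cacti
  have hcact0 : ∀ j, IsCactus (W0 j) (F0 j) (r j) := by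
    intro j
    have hnd : (Lp j).Nodup := by
      rw [hLpdef]
      refine List.Nodup.map_on ?_ List.nodup_range
      intro a ha b hb hab
      rw [List.mem_range] at ha hb
      exact (hroot_inj (horbp j a ha) (by rw [horbp j b hb, hab])).1
    have hhead : (Lp j).head? = some (r j) := by
      rw [List.head?_eq_getElem?, hLpdef, getElem?_rangeMap, if_pos (hplen_pos j), horbp0 j]
    exact IsCactus.trunk (r j) (Lp j) hnd hhead
  have harc0 : ∀ j, ∀ a ∈ F0 j, HasArc g h a.1 a.2 := by
    intro j a ha
    have hstep : ∀ k, k + 1 < plen j → S (orbp j k) = some (orbp j (k + 1)) := by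
      intro k hk
      have h1 := horbp j (k + 1) hk
      rw [oiter_succ', horbp j k (by omega), Option.bind] at h1
      exact h1
    have := pathArcs_S S (orbp j) (plen j) hstep a ha
    exact Smap_arc hMCS this
  have hdisj0 : Pairwise (fun j j' => Disjoint (W0 j) (W0 j')) := by
    intro j j' hjj'
    rw [Set.disjoint_left]
    intro v hv hv'
    obtain ⟨a, ha, hav⟩ := hmemLp.mp hv
    obtain ⟨b, hb, hbv⟩ := hmemLp.mp hv'
    exact hjj' (hroot_inj (by rw [horbp j a ha, hav]) (by rw [horbp j' b hb, hbv])).2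
  exact attach_loop hMCS hforest ((Set.univ \ ⋃ j, W0 j).ncard) W0 F0 hcact0 harc0
    hdisj0 (fun v hv => ⟨hcyc0 v hv, hclosed0 v hv⟩) le_rfl

end Final


/-- Under the binary assumption, `𝔾` has an unbalanced similarity class
of multi-colored subgraphs together with a spanning disjoint union of `m` cacti rooted at
the `m` input vertices iff it has an unbalanced similarity class together with a spanning
forest rooted at the `m` input vertices. -/
theorem stmt2 (n m q : ℕ) (hn : 1 ≤ n) (hm : 1 ≤ m) (hq : 1 ≤ q)
    (g : Fin q → Fin n → ℝ) (h : Fin q → Fin (n + m) → ℝ)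
    (hbin : BinaryAssumption g h) :
    (HasUnbalancedClass g h ∧ HasSpanningCacti g h) ↔
      (HasUnbalancedClass g h ∧ HasSpanningForestAtInputs g h) := by
  constructor
  · rintro ⟨hu, hx⟩
    exact ⟨hu, forest_of_cacti hx⟩
  · rintro ⟨hu, hforest⟩
    refine ⟨hu, ?_⟩
    obtain ⟨t, c, μ, hMCS, -, -⟩ := hu
    exact cacti_of_forest hMCS hforest

end StructCtrl
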